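/- Let k ≥ 2 and J ≥ 1 be integers, and let ℓ be a real number with −k + 1 < ℓ < k − 1. There exists a constant C > 0, depending only on k, J and ℓ, such that for all scales λ_1 ≥ λ_2 ≥ … ≥ λ_J > 0 and every index i ∈ {1, …, J}: Σ_{j ≠ i} [ (1/(λ_i·λ_j))·∫_0^∞ ΛQ(r/λ_i)·ΛQ(r/λ_j)·r dr ]·λ_j^ℓ ≤ C·[ 1_{i ≤ J−1}·(λ_{i+1}/λ_i)^{k−1+ℓ} + 1_{i ≥ 2}·(λ_i/λ_{i−1})^{k−1−ℓ} ]·λ_i^ℓ. -/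

import Mathlib

open MeasureTheory

/-- `ΛQ(y) = y Q'(y) = 2k y^k/(1+y^{2k})`. -/
noncomputable def LamQ (k : ℕ) (y : ℝ) : ℝ := 2 * k * y ^ k / (1 + y ^ (2 * k))

lemma denom_pos (k : ℕ) (y : ℝ) : 0 < 1 + y ^ (2 * k) := by
  have : 0 ≤ y ^ (2 * k) := by rw [pow_mul]; exact pow_nonneg (sq_nonneg y) k
  linarith

lemma LamQ_nonneg (k : ℕ) {y : ℝ} (hy : 0 ≤ y) : 0 ≤ LamQ k y := by
  unfold LamQ
  have := denom_pos k y
  positivity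

lemma continuous_LamQ (k : ℕ) : Continuous (LamQ k) := by
  unfold LamQ
  exact Continuous.div (by continuity) (by continuity) (fun y => (denom_pos k y).ne')

lemma LamQ_le_pow (k : ℕ) {y : ℝ} (hy : 0 ≤ y) : LamQ k y ≤ 2 * k * y ^ k := by
  unfold LamQ
  exact div_le_self (by positivity) (by nlinarith [denom_pos k y, pow_mul y 2 k, pow_nonneg (sq_nonneg y) k])

lemma LamQ_mul_le (k : ℕ) {y : ℝ} (hy : 0 < y) : LamQ k y * y ^ k ≤ 2 * k := by
  unfold LamQ
  rw [div_mul_eq_mul_div, div_le_iff₀ (denom_pos k y)]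
  have h1 : y ^ k * y ^ k = y ^ (2 * k) := by rw [← pow_add, two_mul]
  have h2 : (0:ℝ) ≤ 2 * k := by positivity
  nlinarith [denom_pos k y]

lemma LamQ_le_div (k : ℕ) {y : ℝ} (hy : 0 < y) : LamQ k y ≤ 2 * k / y ^ k := by
  rw [le_div_iff₀ (pow_pos hy k)]
  exact LamQ_mul_le k hy

lemma integral_bound (k : ℕ) (hk : 2 ≤ k) {lam mu : ℝ} (hmu : 0 < mu) (hle : mu ≤ lam) :
    (∫ r in Set.Ioi (0:ℝ), LamQ k (r / lam) * LamQ k (r / mu) * r)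
      ≤ 4 * k ^ 2 * (mu / lam) ^ k * lam ^ 2 := by
  have hlam : 0 < lam := lt_of_lt_of_le hmu hle
  set f : ℝ → ℝ := fun r => LamQ k (r / lam) * LamQ k (r / mu) * r with hf
  have hcont : Continuous f := by
    apply Continuous.mul
    apply Continuous.mul
    · exact (continuous_LamQ k).comp (continuous_id.div_const lam)
    · exact (continuous_LamQ k).comp (continuous_id.div_const mu)
    · exact continuous_id
  -- nonnegativity of f on positive reals
  have hf_nonneg : ∀ r : ℝ, 0 < r → 0 ≤ f r := by
    intro r hr
    have h1 : 0 ≤ LamQ k (r / lam) := LamQ_nonneg k (by positivity)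
    have h2 : 0 ≤ LamQ k (r / mu) := LamQ_nonneg k (by positivity)
    positivity
  -- pointwise bounds
  have hbd1 : ∀ r : ℝ, 0 < r → r ≤ lam → f r ≤ (4 * k ^ 2 * (mu / lam) ^ k) * r := by
    intro r hr hrlam
    have h1 : LamQ k (r / lam) ≤ 2 * k * (r / lam) ^ k := LamQ_le_pow k (by positivity)
    have h2 : LamQ k (r / mu) ≤ 2 * k / (r / mu) ^ k := LamQ_le_div k (by positivity)
    have h1' : 0 ≤ LamQ k (r / lam) := LamQ_nonneg k (by positivity)
    have h2' : 0 ≤ LamQ k (r / mu) := LamQ_nonneg k (by positivity)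
    have key : LamQ k (r / lam) * LamQ k (r / mu) ≤ 4 * k ^ 2 * (mu / lam) ^ k := by
      calc LamQ k (r / lam) * LamQ k (r / mu)
          ≤ (2 * k * (r / lam) ^ k) * (2 * k / (r / mu) ^ k) :=
            mul_le_mul h1 h2 h2' (by positivity)
        _ = 4 * k ^ 2 * (mu / lam) ^ k := by
            rw [div_pow, div_pow, div_pow]
            field_simp
            ring
    calc f r = (LamQ k (r / lam) * LamQ k (r / mu)) * r := rfl
      _ ≤ (4 * k ^ 2 * (mu / lam) ^ k) * r :=
          mul_le_mul_of_nonneg_right key hr.le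
  have hbd2 : ∀ r : ℝ, lam < r → f r ≤ (4 * k ^ 2 * lam ^ k * mu ^ k) * r ^ ((1:ℝ) - 2 * k) := by
    intro r hr
    have hr0 : 0 < r := lt_trans hlam hr
    have h1 : LamQ k (r / lam) ≤ 2 * k / (r / lam) ^ k := LamQ_le_div k (by positivity)
    have h2 : LamQ k (r / mu) ≤ 2 * k / (r / mu) ^ k := LamQ_le_div k (by positivity)
    have h1' : 0 ≤ LamQ k (r / lam) := LamQ_nonneg k (by positivity)
    have key : LamQ k (r / lam) * LamQ k (r / mu)
        ≤ 4 * k ^ 2 * lam ^ k * mu ^ k / r ^ (2 * k) := by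
      calc LamQ k (r / lam) * LamQ k (r / mu)
          ≤ (2 * k / (r / lam) ^ k) * (2 * k / (r / mu) ^ k) :=
            mul_le_mul h1 h2 (LamQ_nonneg k (by positivity)) (by positivity)
        _ = 4 * k ^ 2 * lam ^ k * mu ^ k / r ^ (2 * k) := by
            have hr2 : r ^ (2 * k) = r ^ k * r ^ k := by rw [two_mul, pow_add]
            rw [div_pow, div_pow, hr2]
            field_simp
            ring
    have hrpow : r ^ ((1:ℝ) - 2 * k) = r / r ^ (2 * k) := by
      rw [show ((1:ℝ) - 2 * k) = 1 - ((2 * k : ℕ) : ℝ) by push_cast; ring,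
        Real.rpow_sub hr0, Real.rpow_one, Real.rpow_natCast]
    calc f r = (LamQ k (r / lam) * LamQ k (r / mu)) * r := rfl
      _ ≤ (4 * k ^ 2 * lam ^ k * mu ^ k / r ^ (2 * k)) * r :=
          mul_le_mul_of_nonneg_right key hr0.le
      _ = (4 * k ^ 2 * lam ^ k * mu ^ k) * r ^ ((1:ℝ) - 2 * k) := by
          rw [hrpow]; ring
  -- integrability of the majorants
  have hp : ((1:ℝ) - 2 * k) < -1 := by
    have : (2:ℝ) ≤ (k:ℝ) := by exact_mod_cast hk
    linarith
  have hint2 : IntegrableOn (fun r : ℝ => (4 * k ^ 2 * lam ^ k * mu ^ k) * r ^ ((1:ℝ) - 2 * k))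
      (Set.Ioi lam) := (integrableOn_Ioi_rpow_of_lt hp hlam).const_mul _
  have hfint2 : IntegrableOn f (Set.Ioi lam) := by
    apply Integrable.mono' hint2 (hcont.aestronglyMeasurable.restrict)
    filter_upwards [ae_restrict_mem measurableSet_Ioi] with r hr
    rw [Real.norm_eq_abs, abs_of_nonneg (hf_nonneg r (lt_trans hlam hr))]
    exact hbd2 r hr
  have hfint1 : IntegrableOn f (Set.Ioc 0 lam) := hcont.integrableOn_Ioc
  -- split the integral
  have hsplit : (∫ r in Set.Ioi (0:ℝ), f r)
      = (∫ r in Set.Ioc (0:ℝ) lam, f r) + ∫ r in Set.Ioi lam, f r := by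
    rw [← setIntegral_union (Set.Ioc_disjoint_Ioi le_rfl) measurableSet_Ioi hfint1 hfint2,
      Set.Ioc_union_Ioi_eq_Ioi hlam.le]
  -- bound pieces
  have hI1 : (∫ r in Set.Ioc (0:ℝ) lam, f r)
      ≤ (4 * k ^ 2 * (mu / lam) ^ k) * (lam ^ 2 / 2) := by
    have : (∫ r in Set.Ioc (0:ℝ) lam, f r)
        ≤ ∫ r in Set.Ioc (0:ℝ) lam, (4 * k ^ 2 * (mu / lam) ^ k) * r := by
      apply integral_mono_of_nonneg
      · filter_upwards [ae_restrict_mem measurableSet_Ioc] with r hr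
        exact hf_nonneg r hr.1
      · exact (Continuous.integrableOn_Ioc (by continuity))
      · filter_upwards [ae_restrict_mem measurableSet_Ioc] with r hr
        exact hbd1 r hr.1 hr.2
    refine this.trans_eq ?_
    rw [MeasureTheory.integral_const_mul]
    congr 1
    rw [← intervalIntegral.integral_of_le hlam.le, integral_id]
    ring
  have hI2 : (∫ r in Set.Ioi lam, f r)
      ≤ (4 * k ^ 2 * lam ^ k * mu ^ k) * (lam ^ ((2:ℝ) - 2 * k) / (2 * k - 2)) := by
    have : (∫ r in Set.Ioi lam, f r)
        ≤ ∫ r in Set.Ioi lam, (4 * k ^ 2 * lam ^ k * mu ^ k) * r ^ ((1:ℝ) - 2 * k) := by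
      apply integral_mono_of_nonneg
      · filter_upwards [ae_restrict_mem measurableSet_Ioi] with r hr
        exact hf_nonneg r (lt_trans hlam hr)
      · exact hint2
      · filter_upwards [ae_restrict_mem measurableSet_Ioi] with r hr
        exact hbd2 r hr
    refine this.trans_eq ?_
    rw [MeasureTheory.integral_const_mul, integral_Ioi_rpow_of_lt hp hlam]
    congr 1
    have h2k : (2:ℝ) ≤ (k:ℝ) := by exact_mod_cast hk
    rw [show (1:ℝ) - 2 * ↑k + 1 = 2 - 2 * ↑k by ring]
    have hne : (2:ℝ) - 2 * k ≠ 0 := by linarith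
    have hne2 : (2:ℝ) * k - 2 ≠ 0 := by linarith
    field_simp
    rw [← div_neg, neg_sub]
  -- combine
  rw [hsplit]
  have h2k : (2:ℝ) ≤ (k:ℝ) := by exact_mod_cast hk
  have heq : (4 * (k:ℝ) ^ 2 * lam ^ k * mu ^ k) * lam ^ ((2:ℝ) - 2 * k)
      = 4 * k ^ 2 * (mu / lam) ^ k * lam ^ 2 := by
    have hl1 : lam ^ ((2:ℝ) - 2 * k) = lam ^ 2 / lam ^ (2 * k) := by
      rw [show ((2:ℝ) - 2 * k) = ((2:ℕ):ℝ) - ((2 * k : ℕ) : ℝ) by push_cast; ring,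
        Real.rpow_sub hlam, Real.rpow_natCast, Real.rpow_natCast]
    have hr2 : lam ^ (2 * k) = lam ^ k * lam ^ k := by rw [two_mul, pow_add]
    rw [hl1, hr2, div_pow]
    field_simp
  have hA : (0:ℝ) ≤ 4 * (k:ℝ) ^ 2 * (mu / lam) ^ k * lam ^ 2 := by positivity
  have hI2' : (∫ r in Set.Ioi lam, f r) ≤ 4 * (k:ℝ) ^ 2 * (mu / lam) ^ k * lam ^ 2 / 2 := by
    refine hI2.trans ?_
    rw [← mul_div_assoc, heq]
    exact div_le_div_of_nonneg_left hA (by norm_num) (by linarith)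
  linarith [hI1, hI2']

lemma ratio_bound (k : ℕ) (hk : 2 ≤ k) {a b : ℝ} (hb : 0 < b) (hba : b ≤ a) :
    (1 / (a * b)) * (∫ r in Set.Ioi (0:ℝ), LamQ k (r / a) * LamQ k (r / b) * r)
      ≤ 4 * k ^ 2 * (b / a) ^ (k - 1) := by
  have ha : 0 < a := lt_of_lt_of_le hb hba
  have h := integral_bound k hk hb hba
  have h2 : (1 / (a * b)) * (∫ r in Set.Ioi (0:ℝ), LamQ k (r / a) * LamQ k (r / b) * r)
      ≤ (1 / (a * b)) * (4 * k ^ 2 * (b / a) ^ k * a ^ 2) :=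
    mul_le_mul_of_nonneg_left h (by positivity)
  refine h2.trans_eq ?_
  have hks : (b / a) ^ k = (b / a) ^ (k - 1) * (b / a) := by
    conv_lhs => rw [show k = (k - 1) + 1 by omega]
    rw [pow_succ]
  rw [hks, div_pow]
  field_simp


/-- Mapping property for multi-bubble interactions: for `k ≥ 2`, `J ≥ 1`, and
`-k+1 < ℓ < k-1`, there exists `C = C(k,J,ℓ) > 0` such that for all scales
`λ_1 ≥ … ≥ λ_J > 0` and every `i ∈ {1,…,J}`,
`Σ_{j ≠ i} ‖ΛQ_{;i,normalized} ΛQ_{;j,normalized}‖_{L¹(r dr)} λ_j^ℓ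
  ≤ C (1_{i ≤ J-1} (λ_{i+1}/λ_i)^{k-1+ℓ} + 1_{i ≥ 2} (λ_i/λ_{i-1})^{k-1-ℓ}) λ_i^ℓ`. -/
theorem stmt_19 (k J : ℕ) (hk : 2 ≤ k) (hJ : 1 ≤ J) (ℓ : ℝ)
    (hℓ1 : -(k : ℝ) + 1 < ℓ) (hℓ2 : ℓ < (k : ℝ) - 1) :
    ∃ C > (0 : ℝ), ∀ lam : ℕ → ℝ,
      (∀ j, 1 ≤ j → j ≤ J → 0 < lam j) →
      (∀ j, 2 ≤ j → j ≤ J → lam j ≤ lam (j - 1)) →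
      ∀ i, 1 ≤ i → i ≤ J →
      ∑ j ∈ (Finset.Icc 1 J).erase i,
          ((1 / (lam i * lam j)) *
              ∫ r in Set.Ioi (0 : ℝ), LamQ k (r / lam i) * LamQ k (r / lam j) * r) *
            lam j ^ ℓ
        ≤ C * ((if i + 1 ≤ J then (lam (i + 1) / lam i) ^ ((k : ℝ) - 1 + ℓ) else 0)
                + (if 2 ≤ i then (lam i / lam (i - 1)) ^ ((k : ℝ) - 1 - ℓ) else 0)) *
            lam i ^ ℓ := by
  have hk0 : (0:ℝ) < (k:ℝ) := by exact_mod_cast lt_of_lt_of_le two_pos hk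
  have hJ0 : (0:ℝ) < (J:ℝ) := by exact_mod_cast hJ
  refine ⟨4 * k ^ 2 * J, by positivity, ?_⟩
  intro lam hpos hdec i hi1 hiJ
  have hmono : ∀ a b, 1 ≤ a → a ≤ b → b ≤ J → lam b ≤ lam a := by
    intro a b ha hab hbJ
    induction b, hab using Nat.le_induction with
    | base => exact le_rfl
    | succ n hn ih =>
      have h1 : lam (n + 1) ≤ lam n := by
        have := hdec (n + 1) (by omega) hbJ
        simpa using this
      exact h1.trans (ih (by omega))
  have hli : 0 < lam i := hpos i hi1 hiJ
  have hk1R : (0:ℝ) < (k:ℝ) - 1 + ℓ := by linarith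
  have hk2R : (0:ℝ) < (k:ℝ) - 1 - ℓ := by linarith
  set B := (if i + 1 ≤ J then (lam (i + 1) / lam i) ^ ((k : ℝ) - 1 + ℓ) else 0)
      + (if 2 ≤ i then (lam i / lam (i - 1)) ^ ((k : ℝ) - 1 - ℓ) else 0) with hB
  have hB1 : (0:ℝ) ≤ (if i + 1 ≤ J then (lam (i + 1) / lam i) ^ ((k : ℝ) - 1 + ℓ) else 0) := by
    split_ifs with h
    · have := hpos (i + 1) (by omega) h
      positivity
    · exact le_rfl
  have hB2 : (0:ℝ) ≤ (if 2 ≤ i then (lam i / lam (i - 1)) ^ ((k : ℝ) - 1 - ℓ) else 0) := by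
    split_ifs with h
    · have := hpos (i - 1) (by omega) (by omega)
      positivity
    · exact le_rfl
  have hBnn : 0 ≤ B := add_nonneg hB1 hB2
  have hcastk : (((k - 1 : ℕ)):ℝ) = (k:ℝ) - 1 := by
    rw [Nat.cast_sub (by omega), Nat.cast_one]
  have hterm : ∀ j ∈ (Finset.Icc 1 J).erase i,
      ((1 / (lam i * lam j)) *
          ∫ r in Set.Ioi (0 : ℝ), LamQ k (r / lam i) * LamQ k (r / lam j) * r) * lam j ^ ℓ
        ≤ 4 * k ^ 2 * B * lam i ^ ℓ := by
    intro j hj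
    rw [Finset.mem_erase, Finset.mem_Icc] at hj
    obtain ⟨hne, hj1, hjJ⟩ := hj
    have hlj : 0 < lam j := hpos j hj1 hjJ
    rcases lt_or_gt_of_ne hne with hlt | hgt
    · -- j < i, so lam i ≤ lam j, i ≥ 2
      have hi2 : 2 ≤ i := by omega
      have hlam_ij : lam i ≤ lam j := hmono j i hj1 hlt.le hiJ
      have hprev0 : 0 < lam (i - 1) := hpos (i - 1) (by omega) (by omega)
      have hlam_prev : lam (i - 1) ≤ lam j := hmono j (i - 1) hj1 (by omega) (by omega)
      have hsymm : (∫ r in Set.Ioi (0:ℝ), LamQ k (r / lam i) * LamQ k (r / lam j) * r)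
          = ∫ r in Set.Ioi (0:ℝ), LamQ k (r / lam j) * LamQ k (r / lam i) * r := by
        congr 1
        funext r
        ring
      have h1 : (1 / (lam i * lam j)) *
          (∫ r in Set.Ioi (0:ℝ), LamQ k (r / lam i) * LamQ k (r / lam j) * r)
          ≤ 4 * k ^ 2 * (lam i / lam j) ^ (k - 1) := by
        rw [hsymm, mul_comm (lam i)]
        exact ratio_bound k hk hli hlam_ij
      have h2 : ((1 / (lam i * lam j)) *
          (∫ r in Set.Ioi (0:ℝ), LamQ k (r / lam i) * LamQ k (r / lam j) * r)) * lam j ^ ℓ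
          ≤ 4 * k ^ 2 * (lam i / lam j) ^ (k - 1) * lam j ^ ℓ :=
        mul_le_mul_of_nonneg_right h1 (Real.rpow_nonneg hlj.le ℓ)
      refine h2.trans ?_
      have hx : (0:ℝ) < lam i / lam j := by positivity
      have hnat : (lam i / lam j) ^ (k - 1) = (lam i / lam j) ^ ((k:ℝ) - 1) := by
        rw [← Real.rpow_natCast (lam i / lam j) (k - 1), hcastk]
      have hljℓ : lam j ^ ℓ = (lam i / lam j) ^ (-ℓ) * lam i ^ ℓ := by
        rw [Real.rpow_neg hx.le, ← Real.inv_rpow hx.le, inv_div,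
          ← Real.mul_rpow (by positivity) (by positivity), div_mul_cancel₀ _ hli.ne']
      have hcomb : 4 * (k:ℝ) ^ 2 * (lam i / lam j) ^ (k - 1) * lam j ^ ℓ
          = 4 * k ^ 2 * ((lam i / lam j) ^ ((k:ℝ) - 1 - ℓ) * lam i ^ ℓ) := by
        have hxx : (lam i / lam j) ^ ((k:ℝ) - 1) * (lam i / lam j) ^ (-ℓ)
            = (lam i / lam j) ^ ((k:ℝ) - 1 - ℓ) := by
          rw [← Real.rpow_add hx, show (k:ℝ) - 1 + -ℓ = (k:ℝ) - 1 - ℓ by ring]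
        rw [hnat, hljℓ, ← hxx]
        ring
      rw [hcomb]
      have hstep : (lam i / lam j) ^ ((k:ℝ) - 1 - ℓ) ≤ (lam i / lam (i - 1)) ^ ((k:ℝ) - 1 - ℓ) :=
        Real.rpow_le_rpow hx.le (div_le_div_of_nonneg_left hli.le hprev0 hlam_prev) hk2R.le
      have hstep2 : (lam i / lam (i - 1)) ^ ((k:ℝ) - 1 - ℓ) ≤ B := by
        rw [hB, if_pos hi2]
        exact le_add_of_nonneg_left hB1
      have hlilℓ : (0:ℝ) ≤ lam i ^ ℓ := Real.rpow_nonneg hli.le ℓ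
      have : (lam i / lam j) ^ ((k:ℝ) - 1 - ℓ) * lam i ^ ℓ ≤ B * lam i ^ ℓ :=
        mul_le_mul_of_nonneg_right (hstep.trans hstep2) hlilℓ
      calc 4 * (k:ℝ) ^ 2 * ((lam i / lam j) ^ ((k:ℝ) - 1 - ℓ) * lam i ^ ℓ)
          ≤ 4 * (k:ℝ) ^ 2 * (B * lam i ^ ℓ) := mul_le_mul_of_nonneg_left this (by positivity)
        _ = 4 * k ^ 2 * B * lam i ^ ℓ := by ring
    · -- i < j, so lam j ≤ lam i, i + 1 ≤ J
      have hiJ' : i + 1 ≤ J := by omega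
      have hlam_ji : lam j ≤ lam i := hmono i j hi1 hgt.le hjJ
      have hnext0 : 0 < lam (i + 1) := hpos (i + 1) (by omega) hiJ'
      have hlam_next : lam j ≤ lam (i + 1) := hmono (i + 1) j (by omega) (by omega) hjJ
      have h1 : (1 / (lam i * lam j)) *
          (∫ r in Set.Ioi (0:ℝ), LamQ k (r / lam i) * LamQ k (r / lam j) * r)
          ≤ 4 * k ^ 2 * (lam j / lam i) ^ (k - 1) := ratio_bound k hk hlj hlam_ji
      have h2 : ((1 / (lam i * lam j)) *
          (∫ r in Set.Ioi (0:ℝ), LamQ k (r / lam i) * LamQ k (r / lam j) * r)) * lam j ^ ℓ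
          ≤ 4 * k ^ 2 * (lam j / lam i) ^ (k - 1) * lam j ^ ℓ :=
        mul_le_mul_of_nonneg_right h1 (Real.rpow_nonneg hlj.le ℓ)
      refine h2.trans ?_
      have hx : (0:ℝ) < lam j / lam i := by positivity
      have hnat : (lam j / lam i) ^ (k - 1) = (lam j / lam i) ^ ((k:ℝ) - 1) := by
        rw [← Real.rpow_natCast (lam j / lam i) (k - 1), hcastk]
      have hljℓ : lam j ^ ℓ = (lam j / lam i) ^ ℓ * lam i ^ ℓ := by
        rw [← Real.mul_rpow (by positivity) (by positivity), div_mul_cancel₀ _ hli.ne']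
      have hcomb : 4 * (k:ℝ) ^ 2 * (lam j / lam i) ^ (k - 1) * lam j ^ ℓ
          = 4 * k ^ 2 * ((lam j / lam i) ^ ((k:ℝ) - 1 + ℓ) * lam i ^ ℓ) := by
        have hxx : (lam j / lam i) ^ ((k:ℝ) - 1) * (lam j / lam i) ^ ℓ
            = (lam j / lam i) ^ ((k:ℝ) - 1 + ℓ) := by
          rw [← Real.rpow_add hx]
        rw [hnat, hljℓ, ← hxx]
        ring
      rw [hcomb]
      have hstep : (lam j / lam i) ^ ((k:ℝ) - 1 + ℓ) ≤ (lam (i + 1) / lam i) ^ ((k:ℝ) - 1 + ℓ) :=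
        Real.rpow_le_rpow hx.le ((div_le_div_iff_of_pos_right hli).mpr hlam_next) hk1R.le
      have hstep2 : (lam (i + 1) / lam i) ^ ((k:ℝ) - 1 + ℓ) ≤ B := by
        rw [hB, if_pos hiJ']
        exact le_add_of_nonneg_right hB2
      have hlilℓ : (0:ℝ) ≤ lam i ^ ℓ := Real.rpow_nonneg hli.le ℓ
      have : (lam j / lam i) ^ ((k:ℝ) - 1 + ℓ) * lam i ^ ℓ ≤ B * lam i ^ ℓ :=
        mul_le_mul_of_nonneg_right (hstep.trans hstep2) hlilℓ
      calc 4 * (k:ℝ) ^ 2 * ((lam j / lam i) ^ ((k:ℝ) - 1 + ℓ) * lam i ^ ℓ)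
          ≤ 4 * (k:ℝ) ^ 2 * (B * lam i ^ ℓ) := mul_le_mul_of_nonneg_left this (by positivity)
        _ = 4 * k ^ 2 * B * lam i ^ ℓ := by ring
  have hsum := Finset.sum_le_sum hterm
  refine hsum.trans ?_
  rw [Finset.sum_const, nsmul_eq_mul]
  have hcard : (((Finset.Icc 1 J).erase i).card : ℝ) ≤ (J : ℝ) := by
    have h1 : ((Finset.Icc 1 J).erase i).card ≤ (Finset.Icc 1 J).card :=
      Finset.card_erase_le
    have h2 : (Finset.Icc 1 J).card = J := by rw [Nat.card_Icc]; omega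
    exact_mod_cast h1.trans_eq h2
  have hrhs : (0:ℝ) ≤ 4 * k ^ 2 * B * lam i ^ ℓ := by positivity
  calc (((Finset.Icc 1 J).erase i).card : ℝ) * (4 * k ^ 2 * B * lam i ^ ℓ)
      ≤ (J:ℝ) * (4 * k ^ 2 * B * lam i ^ ℓ) := mul_le_mul_of_nonneg_right hcard hrhs
    _ = 4 * k ^ 2 * J * B * lam i ^ ℓ := by ring
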